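/- Let a, τ > 0 and let γ be the Gauss measure on ℝⁿ. For any ball B ∈ 𝓑_a, let B*_τ be the union of all balls B' that intersect B and satisfy r_{B'} ≤ τ r_B. Then γ(B*_τ) ≤ (2τ+1)ⁿ e^{4a(τ+1) + a²} γ(B). -/

import Mathlib

open MeasureTheory Metric Real

/-- `m(x) = min{1, 1/|x|}`. -/
noncomputable def mfun {n : ℕ} (x : EuclideanSpace ℝ (Fin n)) : ℝ := min 1 ‖x‖⁻¹

/-- The Gauss measure `dγ(x) = π^{-n/2} e^{-|x|²} dx` on `ℝⁿ`. -/
noncomputable def gauss (n : ℕ) : Measure (EuclideanSpace ℝ (Fin n)) :=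
  volume.withDensity fun x => ENNReal.ofReal (Real.pi ^ (-(n : ℝ) / 2) * Real.exp (-‖x‖ ^ 2))

theorem stmt3 (n : ℕ) (a τ : ℝ) (ha : 0 < a) (hτ : 0 < τ)
    (c : EuclideanSpace ℝ (Fin n)) (r : ℝ) (hr0 : 0 < r) (hr : r ≤ a * mfun c) :
    gauss n {y | ∃ (c' : EuclideanSpace ℝ (Fin n)) (r' : ℝ), 0 < r' ∧ r' ≤ τ * r ∧
        (ball c' r' ∩ ball c r).Nonempty ∧ y ∈ ball c' r'} ≤
      ENNReal.ofReal ((2 * τ + 1) ^ n * Real.exp (4 * a * (τ + 1) + a ^ 2)) *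
        gauss n (ball c r) := by
  rcases Nat.eq_zero_or_pos n with hn | hn
  · -- trivial case n = 0 : the space is a single point and ball c r = univ
    subst hn
    haveI : Subsingleton (EuclideanSpace ℝ (Fin 0)) := by
      constructor; intro x y; ext i; exact absurd i.2 (Nat.not_lt_zero _)
    have hball : ball c r = Set.univ := by
      ext y
      simp only [mem_ball, Set.mem_univ, iff_true]
      have : y = c := Subsingleton.elim _ _
      rw [this, dist_self]; exact hr0
    have h1 : gauss 0 {y | ∃ (c' : EuclideanSpace ℝ (Fin 0)) (r' : ℝ), 0 < r' ∧ r' ≤ τ * r ∧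
        (ball c' r' ∩ ball c r).Nonempty ∧ y ∈ ball c' r'} ≤ gauss 0 (ball c r) := by
      rw [hball]; exact measure_mono (Set.subset_univ _)
    refine le_trans h1 ?_
    refine le_mul_of_one_le_left (by simp) ?_
    rw [show ((2 : ℝ) * τ + 1) ^ (0:ℕ) = 1 by norm_num, one_mul]
    rw [ENNReal.one_le_ofReal]
    exact Real.one_le_exp (by nlinarith)
  haveI : Nonempty (Fin n) := ⟨⟨0, hn⟩⟩
  haveI : Nontrivial (EuclideanSpace ℝ (Fin n)) := by
    refine ⟨0, EuclideanSpace.single ⟨0, hn⟩ 1, fun h => ?_⟩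
    have := congrArg (fun v : EuclideanSpace ℝ (Fin n) => v ⟨0, hn⟩) h.symm
    simp [EuclideanSpace.single] at this
  set R : ℝ := (2 * τ + 1) * r with hR
  have hR0 : 0 < R := by positivity
  -- basic facts from hr
  have hra : r ≤ a := le_trans hr (by
    have : mfun c ≤ 1 := min_le_left _ _
    nlinarith)
  have hcr : ‖c‖ * r ≤ a := by
    rcases eq_or_lt_of_le (norm_nonneg c) with h0 | h0
    · rw [← h0]; nlinarith
    · have h1 : r ≤ a * ‖c‖⁻¹ := le_trans hr (by
        have : mfun c ≤ ‖c‖⁻¹ := min_le_right _ _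
        nlinarith)
      have := mul_le_mul_of_nonneg_left h1 (le_of_lt h0)
      rw [mul_comm a ‖c‖⁻¹, ← mul_assoc, mul_inv_cancel₀ (ne_of_gt h0), one_mul] at this
      linarith [this]
  set P : ℝ := Real.pi ^ (-(n : ℝ) / 2) with hP
  have hP0 : 0 < P := Real.rpow_pos_of_pos Real.pi_pos _
  -- the set is contained in the big ball
  have hsub : {y | ∃ (c' : EuclideanSpace ℝ (Fin n)) (r' : ℝ), 0 < r' ∧ r' ≤ τ * r ∧
      (ball c' r' ∩ ball c r).Nonempty ∧ y ∈ ball c' r'} ⊆ ball c R := by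
    rintro y ⟨c', r', hr'0, hr'τ, ⟨x, hx1, hx2⟩, hy⟩
    rw [mem_ball] at *
    have h1 : dist y c ≤ dist y c' + dist c' x + dist x c := by
      calc dist y c ≤ dist y x + dist x c := dist_triangle _ _ _
        _ ≤ (dist y c' + dist c' x) + dist x c := by linarith [dist_triangle y c' x]
    have hx1' : dist c' x < r' := by rw [dist_comm]; exact hx1
    have : dist y c < r' + r' + r := by linarith
    have : dist y c < (2 * τ + 1) * r := by nlinarith
    exact this
  have hmono := measure_mono (μ := gauss n) hsub
  refine le_trans hmono ?_
  -- upper bound for gauss on big ball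
  have hub : gauss n (ball c R) ≤
      ENNReal.ofReal (P * Real.exp (2 * ‖c‖ * R - ‖c‖ ^ 2)) * volume (ball c R) := by
    rw [gauss, withDensity_apply _ measurableSet_ball]
    calc ∫⁻ y in ball c R, ENNReal.ofReal (P * Real.exp (-‖y‖ ^ 2))
        ≤ ∫⁻ _y in ball c R, ENNReal.ofReal (P * Real.exp (2 * ‖c‖ * R - ‖c‖ ^ 2)) := by
          refine setLIntegral_mono' measurableSet_ball (fun y hy => ?_)
          refine ENNReal.ofReal_le_ofReal ?_
          refine mul_le_mul_of_nonneg_left (Real.exp_le_exp.2 ?_) (le_of_lt hP0)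
          rw [mem_ball] at hy
          have h1 : ‖c‖ ≤ R + ‖y‖ := by
            have := norm_sub_norm_le c y
            have h2 : ‖c - y‖ = dist y c := by rw [dist_comm, dist_eq_norm]
            linarith [this, h2 ▸ le_of_lt hy]
          have hy0 := norm_nonneg y
          have hc0 := norm_nonneg c
          by_cases hcR : R ≤ ‖c‖
          · nlinarith [mul_nonneg (by linarith : (0:ℝ) ≤ ‖y‖ - (‖c‖ - R))
              (by linarith : (0:ℝ) ≤ ‖y‖ + (‖c‖ - R)), sq_nonneg R]
          · push_neg at hcR
            nlinarith [sq_nonneg ‖y‖]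
      _ = ENNReal.ofReal (P * Real.exp (2 * ‖c‖ * R - ‖c‖ ^ 2)) * volume (ball c R) := by
          rw [setLIntegral_const]
  refine le_trans hub ?_
  -- lower bound for gauss on small ball
  have hlb : ENNReal.ofReal (P * Real.exp (-(‖c‖ + r) ^ 2)) * volume (ball c r) ≤
      gauss n (ball c r) := by
    rw [gauss, withDensity_apply _ measurableSet_ball]
    calc ENNReal.ofReal (P * Real.exp (-(‖c‖ + r) ^ 2)) * volume (ball c r)
        = ∫⁻ _y in ball c r, ENNReal.ofReal (P * Real.exp (-(‖c‖ + r) ^ 2)) := by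
          rw [setLIntegral_const]
      _ ≤ ∫⁻ y in ball c r, ENNReal.ofReal (P * Real.exp (-‖y‖ ^ 2)) := by
          refine setLIntegral_mono' measurableSet_ball (fun y hy => ?_)
          refine ENNReal.ofReal_le_ofReal ?_
          refine mul_le_mul_of_nonneg_left (Real.exp_le_exp.2 ?_) (le_of_lt hP0)
          rw [mem_ball] at hy
          have h1 : ‖y‖ ≤ ‖c‖ + r := by
            have := norm_sub_norm_le y c
            have h2 : ‖y - c‖ = dist y c := dist_eq_norm y c
            linarith [this, h2 ▸ le_of_lt hy]
          have hy0 := norm_nonneg y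
          nlinarith
  -- volume of balls
  have hvolR : volume (ball c R) = ENNReal.ofReal (R ^ n) * volume (ball (0 : EuclideanSpace ℝ (Fin n)) 1) := by
    rw [Measure.addHaar_ball volume c (le_of_lt hR0)]
    congr 1
    simp [finrank_euclideanSpace_fin]
  have hvolr : volume (ball c r) = ENNReal.ofReal (r ^ n) * volume (ball (0 : EuclideanSpace ℝ (Fin n)) 1) := by
    rw [Measure.addHaar_ball volume c (le_of_lt hr0)]
    congr 1
    simp [finrank_euclideanSpace_fin]
  -- key scalar inequality
  have hkey : P * Real.exp (2 * ‖c‖ * R - ‖c‖ ^ 2) * R ^ n ≤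
      ((2 * τ + 1) ^ n * Real.exp (4 * a * (τ + 1) + a ^ 2)) *
        (P * Real.exp (-(‖c‖ + r) ^ 2)) * r ^ n := by
    have hRn : R ^ n = (2 * τ + 1) ^ n * r ^ n := by rw [hR, mul_pow]
    rw [hRn]
    have hexp : Real.exp (2 * ‖c‖ * R - ‖c‖ ^ 2) ≤
        Real.exp (4 * a * (τ + 1) + a ^ 2) * Real.exp (-(‖c‖ + r) ^ 2) := by
      rw [← Real.exp_add]
      refine Real.exp_le_exp.2 ?_
      have hc0 := norm_nonneg c
      have h4 : (4 * τ + 4) * (‖c‖ * r) ≤ (4 * τ + 4) * a :=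
        mul_le_mul_of_nonneg_left hcr (by linarith)
      nlinarith [sq_nonneg r, mul_pos hr0 hr0]
    have h1 : 0 ≤ (2 * τ + 1) ^ n * r ^ n := by positivity
    calc P * Real.exp (2 * ‖c‖ * R - ‖c‖ ^ 2) * ((2 * τ + 1) ^ n * r ^ n)
        ≤ P * (Real.exp (4 * a * (τ + 1) + a ^ 2) * Real.exp (-(‖c‖ + r) ^ 2)) *
          ((2 * τ + 1) ^ n * r ^ n) := by
          refine mul_le_mul_of_nonneg_right (mul_le_mul_of_nonneg_left hexp (le_of_lt hP0)) h1
      _ = ((2 * τ + 1) ^ n * Real.exp (4 * a * (τ + 1) + a ^ 2)) *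
          (P * Real.exp (-(‖c‖ + r) ^ 2)) * r ^ n := by ring
  -- combine
  calc ENNReal.ofReal (P * Real.exp (2 * ‖c‖ * R - ‖c‖ ^ 2)) * volume (ball c R)
      = ENNReal.ofReal (P * Real.exp (2 * ‖c‖ * R - ‖c‖ ^ 2) * R ^ n) *
        volume (ball (0 : EuclideanSpace ℝ (Fin n)) 1) := by
        rw [hvolR, ← mul_assoc, ← ENNReal.ofReal_mul (by positivity)]
    _ ≤ ENNReal.ofReal (((2 * τ + 1) ^ n * Real.exp (4 * a * (τ + 1) + a ^ 2)) *
        (P * Real.exp (-(‖c‖ + r) ^ 2)) * r ^ n) *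
        volume (ball (0 : EuclideanSpace ℝ (Fin n)) 1) := by
        exact mul_le_mul_left (ENNReal.ofReal_le_ofReal hkey) _
    _ = ENNReal.ofReal ((2 * τ + 1) ^ n * Real.exp (4 * a * (τ + 1) + a ^ 2)) *
        (ENNReal.ofReal (P * Real.exp (-(‖c‖ + r) ^ 2)) * volume (ball c r)) := by
        rw [hvolr]
        rw [ENNReal.ofReal_mul (by positivity), ENNReal.ofReal_mul (by positivity)]
        ring
    _ ≤ ENNReal.ofReal ((2 * τ + 1) ^ n * Real.exp (4 * a * (τ + 1) + a ^ 2)) *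
        gauss n (ball c r) := mul_le_mul_right hlb _
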